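/- In Lehmann's example, a statistic ĝ(X) is a UMVUE if and only if ĝ is constant on the set {-1, 1, 2, 3, ...} (with ĝ(0) arbitrary); equivalently, the subalgebra of UMVUEs is generated by the partition {{0}, {-1,1,2,...}}. -/

import Mathlib

set_option maxHeartbeats 1000000


open MeasureTheory

/-- The probability mass function in Lehmann's example: `X ∈ {-1,0,1,2,...}` with
`P_θ(X = -1) = θ` and `P_θ(X = k) = (1-θ)² θᵏ` for `k = 0,1,2,...`. -/
noncomputable def lehmannP (θ : ℝ) (x : ℤ) : ℝ :=
  if x = -1 then θ else if 0 ≤ x then (1 - θ) ^ 2 * θ ^ x.toNat else 0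

/-- `χ` is a square-integrable unbiased estimator of zero in Lehmann's example. -/
def IsUEZeroLehmann (χ : ℤ → ℝ) : Prop :=
  ∀ θ ∈ Set.Ioo (0 : ℝ) 1,
    Summable (fun x : ℤ => (χ x) ^ 2 * lehmannP θ x) ∧
    Summable (fun x : ℤ => χ x * lehmannP θ x) ∧
    ∑' x : ℤ, χ x * lehmannP θ x = 0

lemma lehmannP_neg_one (θ : ℝ) : lehmannP θ (-1) = θ := by simp [lehmannP]

lemma lehmannP_natCast (θ : ℝ) (k : ℕ) : lehmannP θ (k : ℤ) = (1 - θ) ^ 2 * θ ^ k := by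
  unfold lehmannP
  rw [if_neg (by omega), if_pos (by positivity)]
  simp

lemma lehmannP_of_lt (θ : ℝ) {x : ℤ} (hx : x < -1) : lehmannP θ x = 0 := by
  unfold lehmannP
  rw [if_neg (by omega), if_neg (by omega)]

lemma lehmannP_nonneg {θ : ℝ} (h0 : 0 ≤ θ) (x : ℤ) : 0 ≤ lehmannP θ x := by
  unfold lehmannP
  split
  · exact h0
  split
  · positivity
  · exact le_refl 0

section Transfer

private lemma he : Function.Injective (fun n : ℕ => (n : ℤ) - 1) := by
  intro a b hab
  simpa using hab

private lemma hrange (f : ℤ → ℝ) (h : ∀ x : ℤ, x < -1 → f x = 0) :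
    ∀ x ∉ Set.range (fun n : ℕ => (n : ℤ) - 1), f x = 0 := by
  intro x hx
  apply h
  by_contra hge
  push_neg at hge
  exact hx ⟨(x + 1).toNat, by show ((x + 1).toNat : ℤ) - 1 = x; omega⟩

lemma int_summable (f : ℤ → ℝ) (h : ∀ x : ℤ, x < -1 → f x = 0)
    (h1 : Summable (fun k : ℕ => f (k : ℤ))) : Summable f := by
  have hshift : Summable (fun n : ℕ => f ((↑(n + 1) : ℤ) - 1)) := by
    have : ∀ n : ℕ, ((↑(n + 1) : ℤ) - 1) = (n : ℤ) := by intro n; push_cast; ring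
    simpa [this] using h1
  have h2 : Summable (fun n : ℕ => f ((n : ℤ) - 1)) := (summable_nat_add_iff 1).mp hshift
  exact (he.summable_iff (hrange f h)).mp h2

lemma int_split (f : ℤ → ℝ) (h : ∀ x : ℤ, x < -1 → f x = 0) (hf : Summable f) :
    ∑' x : ℤ, f x = f (-1) + ∑' k : ℕ, f (k : ℤ) := by
  have h1 : ∑' n : ℕ, f ((n : ℤ) - 1) = ∑' x : ℤ, f x :=
    he.tsum_eq (by
      intro x hx
      by_contra hxr
      exact hx (hrange f h x hxr))
  have h2 : Summable (fun n : ℕ => f ((n : ℤ) - 1)) := by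
    have := hf.comp_injective he
    exact this
  rw [← h1, Summable.tsum_eq_zero_add h2]
  have hc : ∀ n : ℕ, ((↑(n + 1) : ℤ) - 1) = (n : ℤ) := by intro n; push_cast; ring
  norm_num [hc]

lemma int_restrict {f : ℤ → ℝ} (hf : Summable f) : Summable (fun k : ℕ => f (k : ℤ)) := by
  have hinj : Function.Injective (fun k : ℕ => (k : ℤ)) := fun a b h => by
    simpa using h
  have := hf.comp_injective hinj
  exact this

end Transfer

section Coeff

lemma coeff_head (a : ℕ → ℝ)
    (hs : ∀ θ ∈ Set.Ioo (0:ℝ) 1, Summable (fun k => a k * θ ^ k))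
    (hz : ∀ θ ∈ Set.Ioo (0:ℝ) 1, ∑' k, a k * θ ^ k = 0) : a 0 = 0 := by
  have hmem : (1/2 : ℝ) ∈ Set.Ioo (0:ℝ) 1 := by norm_num
  have h2 : Summable (fun k => |a k * (1/2:ℝ) ^ k|) := summable_abs_iff.mpr (hs _ hmem)
  have h2' : Summable (fun k => |a (k+1)| * (1/2:ℝ) ^ k) := by
    have h3 := (summable_nat_add_iff 1).mpr h2
    have heq : (fun k => |a (k+1)| * (1/2:ℝ) ^ k)
        = fun k => |a (k+1) * (1/2:ℝ) ^ (k+1)| * 2 := by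
      funext k
      rw [abs_mul, abs_pow]
      rw [show |(1/2:ℝ)| = 1/2 by norm_num]
      ring
    rw [heq]
    exact h3.mul_right 2
  set D := ∑' k, |a (k+1)| * (1/2:ℝ) ^ k with hD
  have hDpos : 0 ≤ D := tsum_nonneg fun k => by positivity
  have key : ∀ θ : ℝ, θ ∈ Set.Ioo (0:ℝ) (1/2) → |a 0| ≤ θ * D := by
    rintro θ ⟨hθ0, hθh⟩
    have hθ1 : θ ∈ Set.Ioo (0:ℝ) 1 := ⟨hθ0, by linarith⟩
    have hsum := hs θ hθ1
    have h0 := hz θ hθ1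
    rw [Summable.tsum_eq_zero_add hsum] at h0
    simp only [pow_zero, mul_one] at h0
    have ha0 : a 0 = -∑' k, a (k+1) * θ ^ (k+1) := by linarith
    have hshift : Summable (fun k => a (k+1) * θ ^ (k+1)) := (summable_nat_add_iff 1).mpr hsum
    have habs : |∑' k, a (k+1) * θ ^ (k+1)| ≤ ∑' k, |a (k+1)| * |θ ^ (k+1)| := by
      have hn := norm_tsum_le_tsum_norm (f := fun k => a (k+1) * θ ^ (k+1))
        (by simpa [Real.norm_eq_abs, abs_mul] using summable_abs_iff.mpr hshift)
      simpa [Real.norm_eq_abs, abs_mul] using hn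
    have hcomp : ∑' k, |a (k+1)| * |θ ^ (k+1)| ≤ ∑' k, θ * (|a (k+1)| * (1/2:ℝ) ^ k) := by
      apply Summable.tsum_le_tsum
      · intro k
        rw [abs_pow, abs_of_nonneg hθ0.le, pow_succ']
        have hkk : θ ^ k ≤ (1/2:ℝ) ^ k := pow_le_pow_left₀ hθ0.le hθh.le k
        have h1 : |a (k+1)| * (θ * θ ^ k) = θ * (|a (k+1)| * θ ^ k) := by ring
        rw [h1]
        have h4 : |a (k+1)| * θ ^ k ≤ |a (k+1)| * (1/2:ℝ) ^ k :=
          mul_le_mul_of_nonneg_left hkk (abs_nonneg _)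
        nlinarith
      · simpa [abs_mul] using summable_abs_iff.mpr hshift
      · exact h2'.mul_left θ
    rw [tsum_mul_left] at hcomp
    rw [ha0, abs_neg]
    exact le_trans habs hcomp
  by_contra hne
  have hpos : 0 < |a 0| := abs_pos.mpr hne
  set θ := min (1/4 : ℝ) (|a 0| / (2 * (D + 1))) with hθdef
  have hθpos : 0 < θ := lt_min (by norm_num) (by positivity)
  have hθlt : θ < 1/2 := lt_of_le_of_lt (min_le_left _ _) (by norm_num)
  have hk := key θ ⟨hθpos, hθlt⟩
  have hle : θ ≤ |a 0| / (2 * (D + 1)) := min_le_right _ _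
  have h5 : |a 0| ≤ (|a 0| / (2 * (D + 1))) * D :=
    le_trans hk (mul_le_mul_of_nonneg_right hle hDpos)
  rw [div_mul_eq_mul_div, le_div_iff₀ (by positivity)] at h5
  nlinarith

lemma coeff_zero (a : ℕ → ℝ)
    (hs : ∀ θ ∈ Set.Ioo (0:ℝ) 1, Summable (fun k => a k * θ ^ k))
    (hz : ∀ θ ∈ Set.Ioo (0:ℝ) 1, ∑' k, a k * θ ^ k = 0) : ∀ k, a k = 0 := by
  intro n
  induction n generalizing a with
  | zero => exact coeff_head a hs hz
  | succ n ih =>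
    have h0 : a 0 = 0 := coeff_head a hs hz
    have hs' : ∀ θ ∈ Set.Ioo (0:ℝ) 1, Summable (fun k => a (k+1) * θ ^ k) := by
      intro θ hθ
      have hθ0 : θ ≠ 0 := ne_of_gt hθ.1
      have hshift : Summable (fun k => a (k+1) * θ ^ (k+1)) :=
        (summable_nat_add_iff 1).mpr (hs θ hθ)
      have heq : (fun k => a (k+1) * θ ^ k) = fun k => a (k+1) * θ ^ (k+1) * θ⁻¹ := by
        funext k; rw [pow_succ]; field_simp
      rw [heq]; exact hshift.mul_right _
    have hz' : ∀ θ ∈ Set.Ioo (0:ℝ) 1, ∑' k, a (k+1) * θ ^ k = 0 := by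
      intro θ hθ
      have hθ0 : θ ≠ 0 := ne_of_gt hθ.1
      have hsum := hs θ hθ
      have h := hz θ hθ
      rw [Summable.tsum_eq_zero_add hsum, h0] at h
      simp only [zero_mul, zero_add] at h
      have heq : (fun k => a (k+1) * θ ^ k) = fun k => a (k+1) * θ ^ (k+1) * θ⁻¹ := by
        funext k; rw [pow_succ]; field_simp
      rw [heq, tsum_mul_right, h, zero_mul]
    exact ih (fun k => a (k+1)) hs' hz'

end Coeff

theorem stmt12 (g : ℤ → ℝ)
    (hg2 : ∀ θ ∈ Set.Ioo (0 : ℝ) 1, Summable (fun x : ℤ => (g x) ^ 2 * lehmannP θ x)) :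
    (∀ χ : ℤ → ℝ, IsUEZeroLehmann χ →
        ∀ θ ∈ Set.Ioo (0 : ℝ) 1, ∑' x : ℤ, g x * χ x * lehmannP θ x = 0) ↔
      ∀ x : ℤ, -1 ≤ x → x ≠ 0 → g x = g (-1) := by
  constructor
  · -- forward
    intro H x hx hx0
    set χ : ℤ → ℝ := fun x => (x : ℝ) with hχdef
    -- χ is an unbiased estimator of zero
    have hue : IsUEZeroLehmann χ := by
      rintro θ ⟨hθ0, hθ1⟩
      have hn : ‖θ‖ < 1 := by rw [Real.norm_eq_abs, abs_of_pos hθ0]; exact hθ1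
      have h1θ : (1 - θ) ≠ 0 := by intro h; linarith [h]
      refine ⟨?_, ?_, ?_⟩
      · apply int_summable _ (fun x hx => by simp [hχdef, lehmannP_of_lt θ hx])
        apply ((summable_pow_mul_geometric_of_norm_lt_one 2 hn).mul_left ((1-θ)^2)).congr
        intro k
        show (1-θ)^2 * ((k:ℝ)^2 * θ^k) = ((k:ℤ):ℝ)^2 * lehmannP θ (k:ℤ)
        rw [lehmannP_natCast]; push_cast; ring
      · apply int_summable _ (fun x hx => by simp [hχdef, lehmannP_of_lt θ hx])
        apply ((summable_pow_mul_geometric_of_norm_lt_one 1 hn).mul_left ((1-θ)^2)).congr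
        intro k
        show (1-θ)^2 * ((k:ℝ)^1 * θ^k) = ((k:ℤ):ℝ) * lehmannP θ (k:ℤ)
        rw [lehmannP_natCast]; push_cast; ring
      · have hsum : Summable (fun x : ℤ => χ x * lehmannP θ x) := by
          apply int_summable _ (fun x hx => by simp [hχdef, lehmannP_of_lt θ hx])
          apply ((summable_pow_mul_geometric_of_norm_lt_one 1 hn).mul_left ((1-θ)^2)).congr
          intro k
          show (1-θ)^2 * ((k:ℝ)^1 * θ^k) = ((k:ℤ):ℝ) * lehmannP θ (k:ℤ)
          rw [lehmannP_natCast]; push_cast; ring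
        rw [int_split _ (fun x hx => by simp [hχdef, lehmannP_of_lt θ hx]) hsum]
        have hb : (fun k : ℕ => χ (k:ℤ) * lehmannP θ (k:ℤ))
            = fun k : ℕ => (1-θ)^2 * ((k:ℝ) * θ^k) := by
          funext k
          show ((k:ℤ):ℝ) * lehmannP θ (k:ℤ) = (1-θ)^2 * ((k:ℝ) * θ^k)
          rw [lehmannP_natCast]; push_cast; ring
        rw [hb, tsum_mul_left, tsum_coe_mul_geometric_of_norm_lt_one hn]
        simp only [hχdef, lehmannP_neg_one]
        push_cast
        field_simp
        ring
    -- conclude coefficients vanish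
    set a : ℕ → ℝ := fun k => (g (k:ℤ) - g (-1)) * (k:ℝ) with hadef
    have key2 : ∀ θ ∈ Set.Ioo (0:ℝ) 1,
        Summable (fun k : ℕ => a k * θ^k) ∧ ∑' k : ℕ, a k * θ^k = 0 := by
      rintro θ ⟨hθ0, hθ1⟩
      have hn : ‖θ‖ < 1 := by rw [Real.norm_eq_abs, abs_of_pos hθ0]; exact hθ1
      have h1θ : (1 - θ) ≠ 0 := by intro h; linarith [h]
      have hvan : ∀ y : ℤ, y < -1 → g y * χ y * lehmannP θ y = 0 :=
        fun y hy => by rw [lehmannP_of_lt θ hy]; ring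
      have hGsum : Summable (fun y : ℤ => g y * χ y * lehmannP θ y) := by
        rw [← summable_abs_iff]
        refine Summable.of_nonneg_of_le (fun y => abs_nonneg _) (fun y => ?_)
          (((hg2 θ ⟨hθ0, hθ1⟩).add ((hue θ ⟨hθ0, hθ1⟩).1)).div_const 2)
        have hp := lehmannP_nonneg hθ0.le y
        have h2ab : 2 * |g y * χ y| ≤ (g y)^2 + (χ y)^2 := by
          rcases abs_cases (g y * χ y) with ⟨h, _⟩ | ⟨h, _⟩ <;>
            nlinarith [sq_nonneg (g y - χ y), sq_nonneg (g y + χ y)]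
        have habs : |g y * χ y * lehmannP θ y| = |g y * χ y| * lehmannP θ y := by
          rw [abs_mul, abs_of_nonneg hp]
        rw [habs]
        nlinarith [mul_le_mul_of_nonneg_right h2ab hp, abs_nonneg (g y * χ y)]
      have hGN : Summable (fun k : ℕ => g (k:ℤ) * χ (k:ℤ) * lehmannP θ (k:ℤ)) :=
        int_restrict hGsum
      have hgeom1 : Summable (fun k : ℕ => (k:ℝ) * θ^k) := by
        have := summable_pow_mul_geometric_of_norm_lt_one 1 hn
        simpa using this
      have heq : (fun k : ℕ => a k * θ^k)
          = fun k : ℕ => (g (k:ℤ) * χ (k:ℤ) * lehmannP θ (k:ℤ)) * ((1-θ)^2)⁻¹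
              - g (-1) * ((k:ℝ) * θ^k) := by
        funext k
        show (g (k:ℤ) - g (-1)) * (k:ℝ) * θ^k
          = (g (k:ℤ) * ((k:ℤ):ℝ) * lehmannP θ (k:ℤ)) * ((1-θ)^2)⁻¹ - g (-1) * ((k:ℝ) * θ^k)
        rw [lehmannP_natCast]
        push_cast
        field_simp
      constructor
      · rw [heq]
        exact (hGN.mul_right _).sub (hgeom1.mul_left _)
      · have h0 := H χ hue θ ⟨hθ0, hθ1⟩
        rw [int_split _ hvan hGsum] at h0
        have hne : χ (-1) = (-1 : ℝ) := by simp [hχdef]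
        rw [lehmannP_neg_one, hne] at h0
        have hSG : ∑' k : ℕ, g (k:ℤ) * χ (k:ℤ) * lehmannP θ (k:ℤ) = g (-1) * θ := by
          linarith
        rw [heq, Summable.tsum_sub (hGN.mul_right _) (hgeom1.mul_left _), tsum_mul_right,
          tsum_mul_left, hSG, tsum_coe_mul_geometric_of_norm_lt_one hn]
        field_simp
        ring
    have key : ∀ k, a k = 0 :=
      coeff_zero a (fun θ h => (key2 θ h).1) (fun θ h => (key2 θ h).2)
    -- finish
    rcases eq_or_lt_of_le hx with h | h
    · rw [← h]
    · have h1 : 1 ≤ x := by omega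
      have hk : (g ((x.toNat : ℕ) : ℤ) - g (-1)) * ((x.toNat : ℕ) : ℝ) = 0 := key x.toNat
      have hc : ((x.toNat : ℕ) : ℤ) = x := by omega
      rw [hc] at hk
      have hkne : ((x.toNat : ℕ) : ℝ) ≠ 0 := by
        simp only [ne_eq, Nat.cast_eq_zero]
        omega
      have := mul_eq_zero.mp hk
      rcases this with h' | h'
      · linarith [sub_eq_zero.mp h']
      · exact absurd h' hkne
  · -- backward
    intro hconst χ hχ θ hθ
    obtain ⟨hθ0, hθ1⟩ := hθ
    -- first: χ 0 = 0
    have hχ0 : χ 0 = 0 := by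
      set b : ℕ → ℝ := fun k => χ (k:ℤ) + χ (-1) * (k:ℝ) with hbdef
      have key2 : ∀ θ' ∈ Set.Ioo (0:ℝ) 1,
          Summable (fun k : ℕ => b k * θ'^k) ∧ ∑' k : ℕ, b k * θ'^k = 0 := by
        rintro θ' ⟨hθ0', hθ1'⟩
        have hn : ‖θ'‖ < 1 := by rw [Real.norm_eq_abs, abs_of_pos hθ0']; exact hθ1'
        have h1θ : (1 - θ') ≠ 0 := by intro h; linarith [h]
        obtain ⟨hs2, hs1, hsz⟩ := hχ θ' ⟨hθ0', hθ1'⟩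
        have hvan : ∀ y : ℤ, y < -1 → χ y * lehmannP θ' y = 0 :=
          fun y hy => by rw [lehmannP_of_lt θ' hy]; ring
        have hN : Summable (fun k : ℕ => χ (k:ℤ) * lehmannP θ' (k:ℤ)) :=
          int_restrict hs1
        have hgeom1 : Summable (fun k : ℕ => (k:ℝ) * θ'^k) := by
          have := summable_pow_mul_geometric_of_norm_lt_one 1 hn
          simpa using this
        have heq : (fun k : ℕ => b k * θ'^k)
            = fun k : ℕ => (χ (k:ℤ) * lehmannP θ' (k:ℤ)) * ((1-θ')^2)⁻¹
                + χ (-1) * ((k:ℝ) * θ'^k) := by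
          funext k
          show (χ (k:ℤ) + χ (-1) * (k:ℝ)) * θ'^k
            = (χ (k:ℤ) * lehmannP θ' (k:ℤ)) * ((1-θ')^2)⁻¹ + χ (-1) * ((k:ℝ) * θ'^k)
          rw [lehmannP_natCast]
          field_simp
        constructor
        · rw [heq]
          exact (hN.mul_right _).add (hgeom1.mul_left _)
        · have h0 := hsz
          rw [int_split _ hvan hs1, lehmannP_neg_one] at h0
          have hS : ∑' k : ℕ, χ (k:ℤ) * lehmannP θ' (k:ℤ) = -(χ (-1) * θ') := by linarith
          rw [heq, Summable.tsum_add (hN.mul_right _) (hgeom1.mul_left _), tsum_mul_right,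
            tsum_mul_left, hS, tsum_coe_mul_geometric_of_norm_lt_one hn]
          field_simp
          ring
      have key : ∀ k, b k = 0 :=
        coeff_zero b (fun t h => (key2 t h).1) (fun t h => (key2 t h).2)
      have := key 0
      simpa [hbdef] using this
    -- pointwise identity
    have hpt : ∀ y : ℤ, g y * χ y * lehmannP θ y = g (-1) * (χ y * lehmannP θ y) := by
      intro y
      rcases lt_trichotomy y (-1) with h | h | h
      · rw [lehmannP_of_lt θ h]; ring
      · rw [h]; ring
      · by_cases h0 : y = 0
        · rw [h0, hχ0]; ring
        · rw [hconst y (by omega) h0]; ring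
    rw [tsum_congr hpt, tsum_mul_left, (hχ θ ⟨hθ0, hθ1⟩).2.2, mul_zero]
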